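/- Every locally one-to-one continuous map defined on a compact metric space is a finite composition of simple maps. -/

import Mathlib

open Topology Set

/-- A map between compact metric spaces is a finite composition of simple
maps: either it is itself a simple map (a continuous surjection whose point
inverses have exactly one or two points), or it is a composition of two such
finite compositions. -/
inductive IsCompOfSimpleMaps :
    ∀ {X Y : Type} [MetricSpace X] [CompactSpace X] [MetricSpace Y] [CompactSpace Y],
      (X → Y) → Prop
  | simple {X Y : Type} [MetricSpace X] [CompactSpace X] [MetricSpace Y] [CompactSpace Y]
      (f : X → Y) (hcont : Continuous f) (hsurj : Function.Surjective f)
      (hfib : ∀ y : Y, Nat.card (f ⁻¹' {y}) = 1 ∨ Nat.card (f ⁻¹' {y}) = 2) :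
      IsCompOfSimpleMaps f
  | comp {X Y Z : Type} [MetricSpace X] [CompactSpace X] [MetricSpace Y] [CompactSpace Y]
      [MetricSpace Z] [CompactSpace Z] (g : Y → Z) (f : X → Y) :
      IsCompOfSimpleMaps g → IsCompOfSimpleMaps f → IsCompOfSimpleMaps (g ∘ f)

section QuotTop

variable {X : Type} [TopologicalSpace X] [CompactSpace X] [T2Space X] (s : Setoid X)

omit [CompactSpace X] [T2Space X] in
theorem glue_isClosedMap
    (hsat : ∀ C : Set X, IsClosed C → IsClosed (Quotient.mk s ⁻¹' (Quotient.mk s '' C))) :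
    IsClosedMap (Quotient.mk s) := fun C hC => by
  rw [← (isQuotientMap_quotient_mk' : IsQuotientMap (Quotient.mk s)).isClosed_preimage]
  exact hsat C hC

theorem glue_t2
    (hsat : ∀ C : Set X, IsClosed C → IsClosed (Quotient.mk s ⁻¹' (Quotient.mk s '' C))) :
    T2Space (Quotient s) := by
  constructor
  intro a b hab
  induction a using Quotient.ind with | _ u => ?_
  induction b using Quotient.ind with | _ v => ?_
  have hKc : IsClosed (Quotient.mk s ⁻¹' (Quotient.mk s '' {u})) := hsat _ isClosed_singleton
  have hLc : IsClosed (Quotient.mk s ⁻¹' (Quotient.mk s '' {v})) := hsat _ isClosed_singleton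
  have hdisj : Disjoint (Quotient.mk s ⁻¹' (Quotient.mk s '' {u}))
      (Quotient.mk s ⁻¹' (Quotient.mk s '' {v})) := by
    rw [Set.disjoint_left]
    rintro w hw hw'
    simp only [Set.image_singleton, Set.mem_preimage, Set.mem_singleton_iff] at hw hw'
    exact hab (hw ▸ hw')
  obtain ⟨U, V, hU, hV, hKU, hLV, hUV⟩ :=
    SeparatedNhds.of_isCompact_isCompact hKc.isCompact hLc.isCompact hdisj
  refine ⟨(Quotient.mk s '' Uᶜ)ᶜ, (Quotient.mk s '' Vᶜ)ᶜ,
    (glue_isClosedMap s hsat _ hU.isClosed_compl).isOpen_compl,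
    (glue_isClosedMap s hsat _ hV.isClosed_compl).isOpen_compl, ?_, ?_, ?_⟩
  · rintro ⟨w, hw, hwu⟩
    exact hw (hKU (by simp only [Set.image_singleton, Set.mem_preimage,
      Set.mem_singleton_iff]; exact hwu))
  · rintro ⟨w, hw, hwv⟩
    exact hw (hLV (by simp only [Set.image_singleton, Set.mem_preimage,
      Set.mem_singleton_iff]; exact hwv))
  · rw [Set.disjoint_left]
    rintro c hc hc'
    induction c using Quotient.ind with | _ w => ?_
    have hwU : w ∈ U := by
      by_contra h
      exact hc ⟨w, h, rfl⟩
    have hwV : w ∈ V := by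
      by_contra h
      exact hc' ⟨w, h, rfl⟩
    exact (Set.disjoint_left.mp hUV hwU) hwV

theorem glue_secondCountable [SecondCountableTopology X]
    (hsat : ∀ C : Set X, IsClosed C → IsClosed (Quotient.mk s ⁻¹' (Quotient.mk s '' C))) :
    SecondCountableTopology (Quotient s) := by
  obtain ⟨b, hbc, -, hb⟩ := TopologicalSpace.exists_countable_basis X
  have hcount : ((fun t : Set (Set X) => (Quotient.mk s '' (⋃₀ t)ᶜ)ᶜ) ''
      {t | t.Finite ∧ t ⊆ b}).Countable :=
    (Set.countable_setOf_finite_subset hbc).image _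
  refine (TopologicalSpace.isTopologicalBasis_of_isOpen_of_nhds ?_ ?_).secondCountableTopology
    hcount
  · rintro _ ⟨t, ⟨htf, htb⟩, rfl⟩
    exact ((glue_isClosedMap s hsat) _
      (isOpen_sUnion fun C hC => hb.isOpen (htb hC)).isClosed_compl).isOpen_compl
  · intro a V haV hV
    induction a using Quotient.ind with | _ u => ?_
    have hfibc : IsCompact (Quotient.mk s ⁻¹' (Quotient.mk s '' {u})) :=
      (hsat _ isClosed_singleton).isCompact
    have hsub : Quotient.mk s ⁻¹' (Quotient.mk s '' {u}) ⊆ Quotient.mk s ⁻¹' V := by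
      intro w hw
      simp only [Set.image_singleton, Set.mem_preimage, Set.mem_singleton_iff] at hw ⊢
      exact hw ▸ haV
    have hchoice : ∀ w ∈ Quotient.mk s ⁻¹' (Quotient.mk s '' {u}),
        ∃ Bw, Bw ∈ b ∧ w ∈ Bw ∧ Bw ⊆ Quotient.mk s ⁻¹' V := fun w hw =>
      hb.exists_subset_of_mem_open (hsub hw) (hV.preimage continuous_quot_mk)
    choose! g hg1 hg2 hg3 using hchoice
    obtain ⟨t0, ht0sub, ht0fin, ht0cov⟩ := hfibc.elim_finite_subcover_image
      (fun w hw => hb.isOpen (hg1 w hw)) (fun w hw => Set.mem_biUnion hw (hg2 w hw))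
    refine ⟨(Quotient.mk s '' (⋃₀ (g '' t0))ᶜ)ᶜ, ⟨g '' t0, ⟨ht0fin.image g, ?_⟩, rfl⟩, ?_, ?_⟩
    · rintro _ ⟨w, hw, rfl⟩
      exact hg1 w (ht0sub hw)
    · rintro ⟨w, hw, hwu⟩
      refine hw ?_
      have hwfib : w ∈ Quotient.mk s ⁻¹' (Quotient.mk s '' {u}) := by
        simp only [Set.image_singleton, Set.mem_preimage, Set.mem_singleton_iff]
        exact hwu
      obtain ⟨w', hw', hmem⟩ := Set.mem_iUnion₂.mp (ht0cov hwfib)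
      exact ⟨g w', ⟨w', hw', rfl⟩, hmem⟩
    · rintro c hc
      induction c using Quotient.ind with | _ w => ?_
      have hwC : w ∈ ⋃₀ (g '' t0) := by
        by_contra h
        exact hc ⟨w, h, rfl⟩
      obtain ⟨_, ⟨w', hw', rfl⟩, hmem⟩ := hwC
      exact hg3 w' (ht0sub hw') hmem

end QuotTop

section GlueSetoid

variable {X Y : Type} (f : X → Y) (A B : Set X)

/-- The relation gluing points of `A` with points of `B` lying in the same fiber of `f`. -/
def glueRel (u v : X) : Prop :=
  u = v ∨ (u ∈ A ∧ v ∈ B ∧ f u = f v) ∨ (u ∈ B ∧ v ∈ A ∧ f u = f v)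

variable {f A B}

theorem glueRel_equivalence (hfA : Set.InjOn f A) (hfB : Set.InjOn f B) :
    Equivalence (glueRel f A B) := by
  constructor
  · intro x; exact Or.inl rfl
  · rintro x y (rfl | ⟨h1, h2, h3⟩ | ⟨h1, h2, h3⟩)
    · exact Or.inl rfl
    · exact Or.inr (Or.inr ⟨h2, h1, h3.symm⟩)
    · exact Or.inr (Or.inl ⟨h2, h1, h3.symm⟩)
  · rintro x y z (rfl | ⟨h1, h2, h3⟩ | ⟨h1, h2, h3⟩) (rfl | ⟨k1, k2, k3⟩ | ⟨k1, k2, k3⟩)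
    · exact Or.inl rfl
    · exact Or.inr (Or.inl ⟨k1, k2, k3⟩)
    · exact Or.inr (Or.inr ⟨k1, k2, k3⟩)
    · exact Or.inr (Or.inl ⟨h1, h2, h3⟩)
    · have hxy : x = y := hfA h1 k1 h3
      subst hxy; exact Or.inr (Or.inl ⟨k1, k2, k3⟩)
    · exact Or.inl (hfA h1 k2 (h3.trans k3))
    · exact Or.inr (Or.inr ⟨h1, h2, h3⟩)
    · exact Or.inl (hfB h1 k2 (h3.trans k3))
    · have hxy : x = y := hfB h1 k1 h3
      subst hxy; exact Or.inr (Or.inr ⟨k1, k2, k3⟩)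

/-- The setoid gluing points of `A` with points of `B` in the same fiber of `f`. -/
def glueSetoid (hfA : Set.InjOn f A) (hfB : Set.InjOn f B) : Setoid X :=
  ⟨glueRel f A B, glueRel_equivalence hfA hfB⟩

variable (hfA : Set.InjOn f A) (hfB : Set.InjOn f B)

theorem glue_sat (C : Set X) :
    Quotient.mk (glueSetoid hfA hfB) ⁻¹' (Quotient.mk (glueSetoid hfA hfB) '' C) =
      C ∪ (A ∩ f ⁻¹' (f '' (B ∩ C))) ∪ (B ∩ f ⁻¹' (f '' (A ∩ C))) := by
  ext v
  simp only [Set.mem_preimage, Set.mem_image, Set.mem_union, Set.mem_inter_iff]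
  constructor
  · rintro ⟨u, huC, huv⟩
    have h : (glueSetoid hfA hfB).r u v := Quotient.exact huv
    rcases h with rfl | ⟨h1, h2, h3⟩ | ⟨h1, h2, h3⟩
    · exact Or.inl (Or.inl huC)
    · exact Or.inr ⟨h2, u, ⟨h1, huC⟩, h3⟩
    · exact Or.inl (Or.inr ⟨h2, u, ⟨h1, huC⟩, h3⟩)
  · rintro ((hvC | ⟨hvA, u, ⟨huB, huC⟩, hfu⟩) | ⟨hvB, u, ⟨huA, huC⟩, hfu⟩)
    · exact ⟨v, hvC, rfl⟩
    · exact ⟨u, huC, Quotient.sound (Or.inr (Or.inr ⟨huB, hvA, hfu⟩))⟩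
    · exact ⟨u, huC, Quotient.sound (Or.inr (Or.inl ⟨huA, hvB, hfu⟩))⟩

/-- Two nontrivial partners of `u` coincide. -/
theorem glue_partner_unique {u v w : X}
    (hv : (glueSetoid hfA hfB).r v u) (hw : (glueSetoid hfA hfB).r w u)
    (hvu : v ≠ u) (hwu : w ≠ u) : v = w := by
  rcases hv with rfl | ⟨h1, h2, h3⟩ | ⟨h1, h2, h3⟩
  · exact absurd rfl hvu
  · rcases hw with rfl | ⟨k1, k2, k3⟩ | ⟨k1, k2, k3⟩
    · exact absurd rfl hwu
    · exact hfA h1 k1 (h3.trans k3.symm)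
    · exact absurd (hfA h1 k2 h3) hvu
  · rcases hw with rfl | ⟨k1, k2, k3⟩ | ⟨k1, k2, k3⟩
    · exact absurd rfl hwu
    · exact absurd (hfB h1 k2 h3) hvu
    · exact hfB h1 k1 (h3.trans k3.symm)

theorem glue_fiber_card (c : Quotient (glueSetoid hfA hfB)) :
    Nat.card (Quotient.mk (glueSetoid hfA hfB) ⁻¹' {c}) = 1 ∨
      Nat.card (Quotient.mk (glueSetoid hfA hfB) ⁻¹' {c}) = 2 := by
  induction c using Quotient.ind with | _ u => ?_
  by_cases h : ∀ v, (glueSetoid hfA hfB).r v u → v = u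
  · left
    have hset : Quotient.mk (glueSetoid hfA hfB) ⁻¹' {Quotient.mk (glueSetoid hfA hfB) u}
        = {u} := by
      ext w
      simp only [Set.mem_preimage, Set.mem_singleton_iff]
      constructor
      · intro hw; exact h w (Quotient.exact hw)
      · rintro rfl; rfl
    rw [hset, Nat.card_coe_set_eq, Set.ncard_singleton]
  · right
    push_neg at h
    obtain ⟨v, hv, hvu⟩ := h
    have hset : Quotient.mk (glueSetoid hfA hfB) ⁻¹' {Quotient.mk (glueSetoid hfA hfB) u}
        = {u, v} := by
      ext w
      simp only [Set.mem_preimage, Set.mem_singleton_iff, Set.mem_insert_iff]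
      constructor
      · intro hw
        by_cases hwu : w = u
        · exact Or.inl hwu
        · exact Or.inr (glue_partner_unique hfA hfB (Quotient.exact hw) hv hwu hvu)
      · rintro (rfl | rfl)
        · rfl
        · exact Quotient.sound hv
    rw [hset, Nat.card_coe_set_eq, Set.ncard_pair (Ne.symm hvu)]

end GlueSetoid

/-- One gluing step: glue together points of `A` and `B` lying in the same fiber of `f`.
The result is a factorization of `f` through a compact metric quotient by a simple map. -/
theorem glue_step {X Y : Type} [MetricSpace X] [CompactSpace X] [MetricSpace Y] [CompactSpace Y]
    (f : X → Y) (hcont : Continuous f)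
    {A B : Set X} (hA : IsClosed A) (hB : IsClosed B)
    (hfA : Set.InjOn f A) (hfB : Set.InjOn f B) :
    ∃ (Q : Type) (_ : MetricSpace Q) (_ : CompactSpace Q) (q : X → Q) (g : Q → Y),
      g ∘ q = f ∧ Continuous q ∧ Function.Surjective q ∧
      (∀ c : Q, Nat.card (q ⁻¹' {c}) = 1 ∨ Nat.card (q ⁻¹' {c}) = 2) ∧
      Continuous g ∧ (∀ C : Set X, IsClosed C → IsClosed (q '' C)) ∧
      Set.InjOn g (q '' (A ∪ B)) ∧ (∀ C : Set X, Set.InjOn f C → Set.InjOn g (q '' C)) := by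
  have hsat : ∀ C : Set X, IsClosed C →
      IsClosed (Quotient.mk (glueSetoid hfA hfB) ⁻¹'
        (Quotient.mk (glueSetoid hfA hfB) '' C)) := by
    intro C hC
    rw [glue_sat]
    refine (hC.union ?_).union ?_
    · exact hA.inter (((hB.inter hC).isCompact.image hcont).isClosed.preimage hcont)
    · exact hB.inter (((hA.inter hC).isCompact.image hcont).isClosed.preimage hcont)
  haveI hT2 : T2Space (Quotient (glueSetoid hfA hfB)) := glue_t2 _ hsat
  haveI : SecondCountableTopology (Quotient (glueSetoid hfA hfB)) :=
    glue_secondCountable _ hsat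
  haveI : TopologicalSpace.MetrizableSpace (Quotient (glueSetoid hfA hfB)) := inferInstance
  letI mQ : MetricSpace (Quotient (glueSetoid hfA hfB)) :=
    TopologicalSpace.metrizableSpaceMetric _
  haveI cQ : CompactSpace (Quotient (glueSetoid hfA hfB)) := by exact Quotient.compactSpace
  have hresp : ∀ a b : X, (glueSetoid hfA hfB).r a b → f a = f b := by
    rintro a b (rfl | ⟨-, -, h⟩ | ⟨-, -, h⟩)
    · rfl
    · exact h
    · exact h
  refine ⟨Quotient (glueSetoid hfA hfB), mQ, cQ, Quotient.mk _, Quotient.lift f hresp,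
    rfl, by exact continuous_quot_mk, by exact Quot.exists_rep, glue_fiber_card hfA hfB,
    by exact continuous_quot_lift _ hcont, ?_, ?_, ?_⟩
  · intro C hC
    exact glue_isClosedMap _ hsat C hC
  · rintro _ ⟨u, hu, rfl⟩ _ ⟨v, hv, rfl⟩ hgl
    have hfuv : f u = f v := hgl
    rcases hu with hu | hu <;> rcases hv with hv | hv
    · exact congrArg _ (hfA hu hv hfuv)
    · exact Quotient.sound (Or.inr (Or.inl ⟨hu, hv, hfuv⟩))
    · exact Quotient.sound (Or.inr (Or.inr ⟨hu, hv, hfuv⟩))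
    · exact congrArg _ (hfB hu hv hfuv)
  · rintro C hinjC _ ⟨u, hu, rfl⟩ _ ⟨v, hv, rfl⟩ hgl
    have hfuv : f u = f v := hgl
    exact congrArg _ (hinjC hu hv hfuv)

/-- Key induction: a continuous surjection which is injective on each member of a finite
closed cover is a finite composition of simple maps. -/
theorem key_induction : ∀ (k : ℕ) (X Y : Type) (_ : MetricSpace X) (_ : CompactSpace X)
    (_ : MetricSpace Y) (_ : CompactSpace Y) (f : X → Y),
    Continuous f → Function.Surjective f →
    ∀ A : Fin k → Set X, (∀ i, IsClosed (A i)) → (⋃ i, A i) = Set.univ →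
    (∀ i, Set.InjOn f (A i)) → IsCompOfSimpleMaps f := by
  intro k
  induction k with
  | zero =>
    intro X Y mX cX mY cY f hcont hsurj A hAc hAu hAi
    have hXempty : IsEmpty X := by
      rw [← Set.univ_eq_empty_iff, ← hAu]
      exact Set.iUnion_of_empty A
    haveI := hXempty
    haveI : IsEmpty Y := ⟨fun y => by obtain ⟨x, -⟩ := hsurj y; exact hXempty.false x⟩
    exact .simple f hcont hsurj (fun y => (IsEmpty.false y).elim)
  | succ k ih =>
    intro X Y mX cX mY cY f hcont hsurj A hAc hAu hAi
    match k, ih, A, hAc, hAu, hAi with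
    | 0, _, A, hAc, hAu, hAi =>
      have hinj : Function.Injective f := by
        intro a b hab
        have ha : a ∈ ⋃ i, A i := hAu ▸ Set.mem_univ a
        have hb : b ∈ ⋃ i, A i := hAu ▸ Set.mem_univ b
        obtain ⟨i, hia⟩ := Set.mem_iUnion.mp ha
        obtain ⟨j, hjb⟩ := Set.mem_iUnion.mp hb
        have hi0 : i = 0 := Fin.fin_one_eq_zero i
        have hj0 : j = 0 := Fin.fin_one_eq_zero j
        exact hAi 0 (hi0 ▸ hia) (hj0 ▸ hjb) hab
      refine .simple f hcont hsurj (fun y => Or.inl ?_)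
      obtain ⟨x, rfl⟩ := hsurj y
      have hset : f ⁻¹' {f x} = {x} := by
        ext w
        simp only [Set.mem_preimage, Set.mem_singleton_iff]
        exact ⟨fun h => hinj h, fun h => h ▸ rfl⟩
      rw [hset, Nat.card_coe_set_eq, Set.ncard_singleton]
    | (m+1), ih, A, hAc, hAu, hAi =>
      obtain ⟨Q, mQ, cQ, q, g, hgq, hqcont, hqsurj, hqfib, hgcont, hqimg, hinjAB, hinjC⟩ :=
        glue_step f hcont (hAc 0) (hAc 1) (hAi 0) (hAi 1)
      have hgsurj : Function.Surjective g := by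
        intro y
        obtain ⟨x, hx⟩ := hsurj y
        exact ⟨q x, by rw [← hgq] at hx; exact hx⟩
      set Bs : Fin (m + 1) → Set Q :=
        fun j => Fin.cases (q '' (A 0 ∪ A 1)) (fun i : Fin m => q '' (A i.succ.succ)) j with hBs
      have hBc : ∀ j, IsClosed (Bs j) := by
        intro j
        induction j using Fin.cases with
        | zero => simpa [hBs] using hqimg _ ((hAc 0).union (hAc 1))
        | succ i => simpa [hBs] using hqimg _ (hAc i.succ.succ)
      have hBu : (⋃ j, Bs j) = Set.univ := by
        rw [Set.eq_univ_iff_forall]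
        intro c
        obtain ⟨u, rfl⟩ := hqsurj c
        have hu : u ∈ ⋃ i, A i := hAu ▸ Set.mem_univ u
        obtain ⟨i, hiu⟩ := Set.mem_iUnion.mp hu
        rw [Set.mem_iUnion]
        induction i using Fin.cases with
        | zero => exact ⟨0, by simp only [hBs, Fin.cases_zero]; exact ⟨u, Or.inl hiu, rfl⟩⟩
        | succ i' =>
          induction i' using Fin.cases with
          | zero => exact ⟨0, by simp only [hBs, Fin.cases_zero]; exact ⟨u, Or.inr hiu, rfl⟩⟩
          | succ i'' =>
            exact ⟨i''.succ, by simp only [hBs, Fin.cases_succ]; exact ⟨u, hiu, rfl⟩⟩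
      have hBi : ∀ j, Set.InjOn g (Bs j) := by
        intro j
        induction j using Fin.cases with
        | zero => simpa [hBs] using hinjAB
        | succ i => simpa [hBs] using hinjC _ (hAi i.succ.succ)
      rw [← hgq]
      exact .comp g q (ih Q Y mQ cQ mY cY g hgcont hgsurj Bs hBc hBu hBi)
        (.simple q hqcont hqsurj hqfib)

/-- (Borsuk–Molski) Every locally one-to-one continuous map from a compact
metric space onto a compact metric space is a finite composition of simple
maps. -/
theorem locally_injective_is_comp_of_simple {X Y : Type} [MetricSpace X]
    [CompactSpace X] [MetricSpace Y] [CompactSpace Y] (f : X → Y)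
    (hcont : Continuous f) (hsurj : Function.Surjective f)
    (hloc : ∀ x : X, ∃ U ∈ nhds x, Set.InjOn f U) :
    IsCompOfSimpleMaps f := by
  have hr : ∀ x : X, ∃ r > 0, Set.InjOn f (Metric.closedBall x r) := by
    intro x
    obtain ⟨U, hU, hUinj⟩ := hloc x
    obtain ⟨ε, hε, hball⟩ := Metric.mem_nhds_iff.mp hU
    refine ⟨ε / 2, by linarith, hUinj.mono ?_⟩
    exact (Metric.closedBall_subset_ball (by linarith)).trans hball
  choose r hrpos hrinj using hr
  obtain ⟨t, ht⟩ := isCompact_univ.elim_finite_subcover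
    (fun x : X => Metric.ball x (r x)) (fun x => Metric.isOpen_ball)
    (fun x _ => Set.mem_iUnion.mpr ⟨x, Metric.mem_ball_self (hrpos x)⟩)
  refine key_induction t.card X Y _ _ _ _ f hcont hsurj
    (fun i => Metric.closedBall (t.equivFin.symm i : X) (r (t.equivFin.symm i)))
    (fun i => Metric.isClosed_closedBall) ?_ (fun i => hrinj _)
  rw [Set.eq_univ_iff_forall]
  intro x
  obtain ⟨c, hct, hxc⟩ := Set.mem_iUnion₂.mp (ht (Set.mem_univ x))
  rw [Set.mem_iUnion]
  refine ⟨t.equivFin ⟨c, hct⟩, ?_⟩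
  simp only [Equiv.symm_apply_apply]
  exact Metric.ball_subset_closedBall hxc
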